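/- arXiv:1808.08075 — 2 statements merged into one kernel-verified Lean document; each statement's English description precedes it below -/
import Mathlib

section
/- With the active control functions u₁, u₂, u₃ defined by u₁ = -Cp + y_r² - ωx - C x_r + B y_r + V₁, u₂ = -μz + xz + (μ-1)y + V₂, u₃ = -x_r y_r - xy + 1 - Ay + (b-1)z + V₃, the error variables e₁ = x_r - x, e₂ = y_r - y, e₃ = z_r - z satisfy the linear system e₁' = (ω - C)e₁ + B e₂ + V₁, e₂' = μ e₃ - μ e₂ + V₂, e₃' = A e₂ - b e₃ + V₃, whenever (x,y,z) solves the Vallis system and (x_r,y_r,z_r) solves the controlled BG system. -/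
/-- With the active control functions u₁, u₂, u₃, the synchronization errors between the
Vallis system (drive) and the controlled BG system (response) satisfy the stated linear
error system. -/
theorem active_control_error_system
    (B C p ω μ A b : ℝ) (x y z xr yr zr V₁ V₂ V₃ u₁ u₂ u₃ : ℝ → ℝ)
    -- Vallis (drive) system
    (hx : ∀ t, HasDerivAt x (B * y t - C * (x t + p)) t)
    (hy : ∀ t, HasDerivAt y (x t * z t - y t) t)
    (hz : ∀ t, HasDerivAt z (-(x t * y t) - z t + 1) t)
    -- controlled BG (response) system
    (hxr : ∀ t, HasDerivAt xr (ω * xr t - (yr t) ^ 2 + u₁ t) t)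
    (hyr : ∀ t, HasDerivAt yr (μ * (zr t - yr t) + u₂ t) t)
    (hzr : ∀ t, HasDerivAt zr (A * yr t - b * zr t + xr t * yr t + u₃ t) t)
    -- active control functions
    (hu₁ : ∀ t, u₁ t = -(C * p) + (yr t) ^ 2 - ω * x t - C * xr t + B * yr t + V₁ t)
    (hu₂ : ∀ t, u₂ t = -(μ * z t) + x t * z t + (μ - 1) * y t + V₂ t)
    (hu₃ : ∀ t, u₃ t = -(xr t * yr t) - x t * y t + 1 - A * y t + (b - 1) * z t + V₃ t) :
    (∀ t, HasDerivAt (fun s => xr s - x s)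
        ((ω - C) * (xr t - x t) + B * (yr t - y t) + V₁ t) t) ∧
    (∀ t, HasDerivAt (fun s => yr s - y s)
        (μ * (zr t - z t) - μ * (yr t - y t) + V₂ t) t) ∧
    (∀ t, HasDerivAt (fun s => zr s - z s)
        (A * (yr t - y t) - b * (zr t - z t) + V₃ t) t) := by
  refine ⟨fun t => ?_, fun t => ?_, fun t => ?_⟩
  · have h := (hxr t).sub (hx t)
    rw [hu₁ t] at h
    exact h.congr_deriv (by ring)
  · have h := (hyr t).sub (hy t)
    rw [hu₂ t] at h
    exact h.congr_deriv (by ring)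
  · have h := (hzr t).sub (hz t)
    rw [hu₃ t] at h
    exact h.congr_deriv (by ring)
end

section
/- For α > 0 and k ∈ ℕ, the Adams quadrature weights a_{j,k+1} defined by a_{0,k+1} = k^{α+1} - (k - α)(k+1)^α, a_{j,k+1} = (k-j+2)^{α+1} + (k-j)^{α+1} - 2(k-j+1)^{α+1} for 1 ≤ j ≤ k, and a_{k+1,k+1} = 1, are all positive. -/
/-- The Adams quadrature weight a_{j, k+1}. -/
noncomputable def adamsWeight (α : ℝ) (k j : ℕ) : ℝ :=
  if j = 0 then (k : ℝ) ^ (α + 1) - ((k : ℝ) - α) * ((k : ℝ) + 1) ^ α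
  else if j = k + 1 then 1
  else ((k : ℝ) - (j : ℝ) + 2) ^ (α + 1) + ((k : ℝ) - (j : ℝ)) ^ (α + 1)
    - 2 * ((k : ℝ) - (j : ℝ) + 1) ^ (α + 1)

/-- Midpoint convexity consequence: for `x ≥ 0` and `α > 0`,
`(x+2)^(α+1) + x^(α+1) > 2*(x+1)^(α+1)`. -/
lemma adams_mid_pos {α x : ℝ} (hα : 0 < α) (hx : 0 ≤ x) :
    0 < (x + 2) ^ (α + 1) + x ^ (α + 1) - 2 * (x + 1) ^ (α + 1) := by
  have hp : (1 : ℝ) < α + 1 := by linarith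
  have h := (strictConvexOn_rpow hp).2 (Set.mem_Ici.2 hx)
      (Set.mem_Ici.2 (by linarith : (0:ℝ) ≤ x + 2)) (by linarith)
      (by norm_num : (0:ℝ) < 1/2) (by norm_num : (0:ℝ) < 1/2) (by norm_num)
  simp only [smul_eq_mul] at h
  have hmid : (1/2 : ℝ) * x + 1/2 * (x + 2) = x + 1 := by ring
  rw [hmid] at h
  linarith

/-- The first-weight inequality: `k^(α+1) - (k-α)*(k+1)^α > 0` for `k ≥ 0`. -/
lemma adams_first_pos {α : ℝ} (hα : 0 < α) (k : ℕ) :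
    0 < (k : ℝ) ^ (α + 1) - ((k : ℝ) - α) * ((k : ℝ) + 1) ^ α := by
  set K : ℝ := (k : ℝ) with hK
  have hK0 : 0 ≤ K := Nat.cast_nonneg k
  have hlt : K < K + 1 := by linarith
  -- MVT for f(x) = x^(α+1) on [K, K+1]
  have hcont : ContinuousOn (fun x : ℝ => x ^ (α + 1)) (Set.Icc K (K + 1)) := by
    intro x _
    exact (Real.continuousAt_rpow_const x (α + 1) (Or.inr (by linarith))).continuousWithinAt
  have hderiv : ∀ x ∈ Set.Ioo K (K + 1),
      HasDerivAt (fun x : ℝ => x ^ (α + 1)) ((α + 1) * x ^ (α + 1 - 1)) x := by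
    intro x hx
    have hxne : x ≠ 0 := (lt_of_le_of_lt hK0 hx.1).ne'
    simpa [mul_comm] using Real.hasDerivAt_rpow_const (p := α + 1) (Or.inl hxne)
  obtain ⟨c, hc, hceq⟩ := exists_hasDerivAt_eq_slope (fun x : ℝ => x ^ (α + 1)) _ hlt hcont hderiv
  have hc0 : 0 < c := lt_of_le_of_lt hK0 hc.1
  simp only [add_sub_cancel_left, div_one, add_sub_cancel_right] at hceq
  -- hceq : (α+1) * c^α = (K+1)^(α+1) - K^(α+1)
  have hcK : c ^ α < (K + 1) ^ α :=
    Real.rpow_lt_rpow (le_of_lt hc0) hc.2 hα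
  have key : (K + 1) ^ (α + 1) - K ^ (α + 1) < (α + 1) * (K + 1) ^ α := by
    rw [← hceq]
    exact mul_lt_mul_of_pos_left hcK (by linarith)
  have hexp : (K + 1) ^ (α + 1) = (K + 1) ^ α * (K + 1) := by
    rw [Real.rpow_add (by linarith) α 1, Real.rpow_one]
  nlinarith [key, hexp]

/-- All the Adams quadrature weights are positive. -/
theorem adamsWeight_pos (α : ℝ) (hα : 0 < α) (k : ℕ) :
    ∀ j ≤ k + 1, 0 < adamsWeight α k j := by
  intro j hj
  unfold adamsWeight
  by_cases h0 : j = 0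
  · simpa [h0] using adams_first_pos hα k
  · by_cases h1 : j = k + 1
    · simp [h0, h1]
    · have hjk : j ≤ k := by omega
      have hx : (0 : ℝ) ≤ (k : ℝ) - (j : ℝ) := by
        have : (j : ℝ) ≤ (k : ℝ) := Nat.cast_le.2 hjk
        linarith
      simpa [h0, h1] using adams_mid_pos hα hx
end
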